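/- Let T be a finite set, f, g : T → ℝ with |f(τ) − g(τ)| ≤ ε for all τ, and α > 0. Define Gibbs distributions p(τ) = exp(f(τ)/α)/Z_p and q(τ) = exp(g(τ)/α)/Z_q with the corresponding normalizers. Then the Kullback–Leibler divergence satisfies KL(p‖q) ≤ ε²/(2α²). -/

import Mathlib

open Finset

lemma key_hoeffding {T : Type*} [Fintype T] [Nonempty T] (w X : T → ℝ)
    (hw : ∀ τ, 0 < w τ) (hsum : ∑ τ, w τ = 1) (c : ℝ)
    (hX : ∀ τ, |X τ| ≤ c) :
    Real.log (∑ τ, w τ * Real.exp (X τ)) ≤ (∑ τ, w τ * X τ) + c ^ 2 / 2 := by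
  have hc : 0 ≤ c := le_trans (abs_nonneg _) (hX (Classical.arbitrary T))
  set S : ℝ → ℝ := fun t => ∑ τ, w τ * Real.exp (t * X τ) with hSdef
  set S1 : ℝ → ℝ := fun t => ∑ τ, w τ * X τ * Real.exp (t * X τ) with hS1def
  set S2 : ℝ → ℝ := fun t => ∑ τ, w τ * X τ ^ 2 * Real.exp (t * X τ) with hS2def
  have hSpos : ∀ t, 0 < S t := fun t =>
    Finset.sum_pos (fun τ _ => mul_pos (hw τ) (Real.exp_pos _)) Finset.univ_nonempty
  have hS : ∀ t, HasDerivAt S (S1 t) t := by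
    intro t
    apply HasDerivAt.fun_sum
    intro τ _
    have h1 : HasDerivAt (fun t : ℝ => t * X τ) (X τ) t := by
      simpa using (hasDerivAt_id t).mul_const (X τ)
    have h2 : HasDerivAt (fun t : ℝ => Real.exp (t * X τ)) (Real.exp (t * X τ) * X τ) t :=
      h1.exp
    have := h2.const_mul (w τ)
    exact this.congr_deriv (by ring)
  have hS1 : ∀ t, HasDerivAt S1 (S2 t) t := by
    intro t
    apply HasDerivAt.fun_sum
    intro τ _
    have h1 : HasDerivAt (fun t : ℝ => t * X τ) (X τ) t := by
      simpa using (hasDerivAt_id t).mul_const (X τ)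
    have h2 : HasDerivAt (fun t : ℝ => Real.exp (t * X τ)) (Real.exp (t * X τ) * X τ) t :=
      h1.exp
    have := h2.const_mul (w τ * X τ)
    exact this.congr_deriv (by ring)
  have hS0 : S 0 = 1 := by
    simp only [hSdef, zero_mul, Real.exp_zero, mul_one]
    exact hsum
  have hX2 : ∀ τ, X τ ^ 2 ≤ c ^ 2 := by
    intro τ
    calc X τ ^ 2 = |X τ| ^ 2 := (sq_abs _).symm
    _ ≤ c ^ 2 := by apply pow_le_pow_left₀ (abs_nonneg _) (hX τ)
  have hS2le : ∀ t, S2 t ≤ c ^ 2 * S t := by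
    intro t
    rw [hS2def, hSdef, Finset.mul_sum]
    apply Finset.sum_le_sum
    intro τ _
    have h := mul_le_mul_of_nonneg_right
      (mul_le_mul_of_nonneg_left (hX2 τ) (hw τ).le) (Real.exp_pos (t * X τ)).le
    calc w τ * X τ ^ 2 * Real.exp (t * X τ) ≤ w τ * c ^ 2 * Real.exp (t * X τ) := h
    _ = c ^ 2 * (w τ * Real.exp (t * X τ)) := by ring
  -- G and its monotonicity
  set G : ℝ → ℝ := fun t => S1 0 + t * c ^ 2 - S1 t / S t with hGdef
  have hG : ∀ t, HasDerivAt G (c ^ 2 - (S2 t * S t - S1 t * S1 t) / S t ^ 2) t := by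
    intro t
    have hdiv : HasDerivAt (fun t => S1 t / S t)
        ((S2 t * S t - S1 t * S1 t) / S t ^ 2) t :=
      (hS1 t).div (hS t) (hSpos t).ne'
    have hlin : HasDerivAt (fun t : ℝ => S1 0 + t * c ^ 2) (c ^ 2) t := by
      simpa using ((hasDerivAt_id t).mul_const (c ^ 2)).const_add (S1 0)
    exact hlin.sub hdiv
  have hG'nonneg : ∀ t, 0 ≤ c ^ 2 - (S2 t * S t - S1 t * S1 t) / S t ^ 2 := by
    intro t
    have hs := hSpos t
    have h1 : S2 t * S t - S1 t * S1 t ≤ c ^ 2 * S t ^ 2 := by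
      nlinarith [hS2le t, sq_nonneg (S1 t)]
    have : (S2 t * S t - S1 t * S1 t) / S t ^ 2 ≤ c ^ 2 := by
      rw [div_le_iff₀ (by positivity)]
      linarith
    linarith
  have hGmono : Monotone G := by
    apply monotone_of_deriv_nonneg
    · exact fun t => ((hG t).differentiableAt)
    · intro t
      rw [(hG t).deriv]
      exact hG'nonneg t
  have hG0 : G 0 = 0 := by
    simp [hGdef, hS0]
  have hGnonneg : ∀ t, 0 ≤ t → 0 ≤ G t := by
    intro t ht
    calc (0:ℝ) = G 0 := hG0.symm
    _ ≤ G t := hGmono ht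
  -- H
  set F : ℝ → ℝ := fun t => Real.log (S t) with hFdef
  set H : ℝ → ℝ := fun t => S1 0 * t + t ^ 2 * c ^ 2 / 2 - F t with hHdef
  have hH : ∀ t, HasDerivAt H (G t) t := by
    intro t
    have hF : HasDerivAt F (S1 t / S t) t := (hS t).log (hSpos t).ne'
    have hlin : HasDerivAt (fun t : ℝ => S1 0 * t + t ^ 2 * c ^ 2 / 2)
        (S1 0 + t * c ^ 2) t := by
      have h1 : HasDerivAt (fun t : ℝ => S1 0 * t) (S1 0) t := by
        simpa using (hasDerivAt_id t).const_mul (S1 0)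
      have h2 : HasDerivAt (fun t : ℝ => t ^ 2 * c ^ 2 / 2) (t * c ^ 2) t := by
        have := (hasDerivAt_pow 2 t).mul_const (c ^ 2)
        have := this.div_const 2
        exact this.congr_deriv (by ring)
      simpa using h1.fun_add h2
    have := hlin.fun_sub hF
    convert this using 1
  have hHmono : MonotoneOn H (Set.Ici (0:ℝ)) := by
    apply monotoneOn_of_deriv_nonneg (convex_Ici 0)
    · have hdiff : Differentiable ℝ H := fun t => (hH t).differentiableAt
      exact hdiff.continuous.continuousOn
    · intro t ht
      exact ((hH t).differentiableAt).differentiableWithinAt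
    · intro t ht
      rw [interior_Ici] at ht
      rw [(hH t).deriv]
      exact hGnonneg t (le_of_lt ht)
  have hH0 : H 0 = 0 := by
    simp [hHdef, hFdef, hS0]
  have h01 : H 0 ≤ H 1 := hHmono (by simp) (by norm_num) (by norm_num)
  rw [hH0] at h01
  have hF1 : F 1 ≤ S1 0 + c ^ 2 / 2 := by
    simp only [hHdef] at h01
    nlinarith
  have hS1' : S 1 = ∑ τ, w τ * Real.exp (X τ) := by
    simp [hSdef]
  have hS10 : S1 0 = ∑ τ, w τ * X τ := by
    simp [hS1def]
  rw [hFdef] at hF1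
  simp only at hF1
  rw [hS1', hS10] at hF1
  linarith

/-- Gibbs distribution with potential f and temperature α. -/
noncomputable def gibbs {T : Type*} [Fintype T] (f : T → ℝ) (α : ℝ) (τ : T) : ℝ :=
  Real.exp (f τ / α) / ∑ τ' : T, Real.exp (f τ' / α)

theorem stmt_8 {T : Type*} [Fintype T] [Nonempty T]
    (f g : T → ℝ) (ε α : ℝ) (hα : 0 < α)
    (hbound : ∀ τ, |f τ - g τ| ≤ ε) :
    ∑ τ : T, gibbs f α τ * Real.log (gibbs f α τ / gibbs g α τ) ≤
      ε ^ 2 / (2 * α ^ 2) := by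
  set Zp : ℝ := ∑ τ' : T, Real.exp (f τ' / α) with hZpdef
  set Zq : ℝ := ∑ τ' : T, Real.exp (g τ' / α) with hZqdef
  have hZp : 0 < Zp := Finset.sum_pos (fun τ _ => Real.exp_pos _) Finset.univ_nonempty
  have hZq : 0 < Zq := Finset.sum_pos (fun τ _ => Real.exp_pos _) Finset.univ_nonempty
  set X : T → ℝ := fun τ => (g τ - f τ) / α with hXdef
  have hw : ∀ τ, 0 < gibbs f α τ := fun τ => div_pos (Real.exp_pos _) hZp
  have hsum : ∑ τ : T, gibbs f α τ = 1 := by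
    unfold gibbs
    rw [← Finset.sum_div, ← hZpdef, div_self hZp.ne']
  have hXb : ∀ τ, |X τ| ≤ ε / α := by
    intro τ
    rw [hXdef]
    rw [abs_div, abs_of_pos hα]
    apply div_le_div_of_nonneg_right ?_ hα.le
    rw [abs_sub_comm]
    exact hbound τ
  have hkey := key_hoeffding (gibbs f α) X hw hsum (ε / α) hXb
  have hsum_exp : ∑ τ : T, gibbs f α τ * Real.exp (X τ) = Zq / Zp := by
    rw [hZqdef, Finset.sum_div]
    apply Finset.sum_congr rfl
    intro τ _
    unfold gibbs
    rw [← hZpdef, div_mul_eq_mul_div, ← Real.exp_add]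
    have hx : f τ / α + X τ = g τ / α := by
      simp only [hXdef]; field_simp; ring
    rw [hx]
  have hterm : ∀ τ, gibbs f α τ * Real.log (gibbs f α τ / gibbs g α τ)
      = gibbs f α τ * (-X τ) + gibbs f α τ * (Real.log Zq - Real.log Zp) := by
    intro τ
    have hlogp : Real.log (gibbs f α τ) = f τ / α - Real.log Zp := by
      unfold gibbs
      rw [← hZpdef, Real.log_div (Real.exp_ne_zero _) hZp.ne', Real.log_exp]
    have hlogq : Real.log (gibbs g α τ) = g τ / α - Real.log Zq := by
      unfold gibbs
      rw [← hZqdef, Real.log_div (Real.exp_ne_zero _) hZq.ne', Real.log_exp]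
    have hq : 0 < gibbs g α τ := div_pos (Real.exp_pos _) hZq
    rw [Real.log_div (hw τ).ne' hq.ne', hlogp, hlogq]
    simp only [hXdef]
    ring
  have hlhs : ∑ τ : T, gibbs f α τ * Real.log (gibbs f α τ / gibbs g α τ)
      = -(∑ τ : T, gibbs f α τ * X τ) + (Real.log Zq - Real.log Zp) := by
    rw [Finset.sum_congr rfl (fun τ _ => hterm τ), Finset.sum_add_distrib,
      ← Finset.sum_mul, hsum, ← Finset.sum_neg_distrib]
    simp [mul_neg]
  have hlog : Real.log Zq - Real.log Zp
      = Real.log (∑ τ : T, gibbs f α τ * Real.exp (X τ)) := by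
    rw [hsum_exp, Real.log_div hZq.ne' hZp.ne']
  have hc2 : (ε / α) ^ 2 / 2 = ε ^ 2 / (2 * α ^ 2) := by
    rw [div_pow]; ring
  rw [hlhs, hlog]
  linarith [hkey, hc2.symm.le]
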